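/- The projection operator P^n F(w) = ∫_ℂ F(z) K^n(w,z) e^{−π|z|²} dA(z), with K^n(w,z) = ∑_{k=0}^n binom(n,k)(1/k!)(−π|w−z|²)^k e^{π z̄ w}, is bounded on the weighted space L_p(ℂ) for every 1 ≤ p ≤ ∞: there is a constant C_n with ‖P^n F‖_{L_p(ℂ)} ≤ C_n ‖F‖_{L_p(ℂ)}. -/

import Mathlib

open ComplexConjugate MeasureTheory

noncomputable section

/-- The reproducing kernel
`K^n(w,z) = ∑_{k=0}^n C(n,k)(1/k!)(-π|w-z|²)^k e^{π z̄ w}`. -/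
def polyKernel (n : ℕ) (w z : ℂ) : ℂ :=
  ∑ k ∈ Finset.range (n + 1), (n.choose k : ℂ) * (1 / (k.factorial : ℂ)) *
    (-Real.pi * Complex.normSq (w - z)) ^ k * Complex.exp (Real.pi * conj z * w)

/-- The projection `P^n F(w) = ∫ F(z) K^n(w,z) e^{-π|z|²} dA(z)`. -/
def polyProj (n : ℕ) (F : ℂ → ℂ) (w : ℂ) : ℂ :=
  ∫ z : ℂ, F z * polyKernel n w z * Real.exp (-Real.pi * Complex.normSq z)

/-- The weighted `L_p(ℂ)` norm. -/
def wLpNorm (F : ℂ → ℂ) (p : ENNReal) : ENNReal :=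
  eLpNorm (fun z : ℂ => F z * Real.exp (-Real.pi * Complex.normSq z / 2)) p
    (volume : Measure ℂ)

/-! ### Auxiliary definitions and lemmas -/

/-- Polynomial part of the dominating kernel. -/
def psiPoly (n : ℕ) (t : ℝ) : ℝ :=
  ∑ k ∈ Finset.range (n + 1), (n.choose k : ℝ) * (1 / (k.factorial : ℝ)) * t ^ k

/-- The dominating kernel `Ψ`. -/
def psiKer (n : ℕ) (u : ℂ) : ℝ :=
  psiPoly n (Real.pi * Complex.normSq u) * Real.exp (-Real.pi * Complex.normSq u / 2)

lemma psiPoly_nonneg (n : ℕ) {t : ℝ} (ht : 0 ≤ t) : 0 ≤ psiPoly n t := by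
  apply Finset.sum_nonneg; intro k _; positivity

lemma pi_normSq_nonneg (u : ℂ) : 0 ≤ Real.pi * Complex.normSq u :=
  mul_nonneg Real.pi_pos.le (Complex.normSq_nonneg u)

lemma psiKer_nonneg (n : ℕ) (u : ℂ) : 0 ≤ psiKer n u :=
  mul_nonneg (psiPoly_nonneg n (pi_normSq_nonneg u)) (Real.exp_nonneg _)

lemma psiKer_neg (n : ℕ) (u : ℂ) : psiKer n (-u) = psiKer n u := by
  simp [psiKer, Complex.normSq_neg]

lemma continuous_psiKer (n : ℕ) : Continuous (psiKer n) := by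
  unfold psiKer psiPoly
  apply Continuous.mul
  · apply continuous_finset_sum
    intro k _
    exact (continuous_const.mul ((continuous_const.mul Complex.continuous_normSq).pow k))
  · exact Real.continuous_exp.comp (by continuity)

lemma psiPoly_le (n : ℕ) {t : ℝ} (ht : 0 ≤ t) : psiPoly n t ≤ 5 ^ n * Real.exp (t / 4) := by
  have h1 : ∀ k : ℕ, t ^ k ≤ (k.factorial : ℝ) * 4 ^ k * Real.exp (t / 4) := by
    intro k
    have hx : (t / 4) ^ k / (k.factorial : ℝ) ≤ Real.exp (t / 4) := by
      calc (t / 4) ^ k / (k.factorial : ℝ)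
          ≤ ∑ i ∈ Finset.range (k + 1), (t / 4) ^ i / (i.factorial : ℝ) :=
            Finset.single_le_sum (f := fun i => (t / 4) ^ i / (i.factorial : ℝ))
              (fun i _ => by positivity) (Finset.self_mem_range_succ k)
        _ ≤ Real.exp (t / 4) := Real.sum_le_exp_of_nonneg (by positivity) _
    have hfac : (0:ℝ) < (k.factorial : ℝ) := by positivity
    have h2 := (div_le_iff₀ hfac).mp hx
    calc t ^ k = (t / 4) ^ k * 4 ^ k := by
          rw [div_pow]; field_simp
      _ ≤ (Real.exp (t / 4) * (k.factorial : ℝ)) * 4 ^ k :=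
          mul_le_mul_of_nonneg_right h2 (by positivity)
      _ = (k.factorial : ℝ) * 4 ^ k * Real.exp (t / 4) := by ring
  calc psiPoly n t ≤ ∑ k ∈ Finset.range (n + 1),
        (n.choose k : ℝ) * (1 / (k.factorial : ℝ)) * ((k.factorial : ℝ) * 4 ^ k * Real.exp (t / 4)) := by
        apply Finset.sum_le_sum
        intro k _
        apply mul_le_mul_of_nonneg_left (h1 k) (by positivity)
    _ = (∑ k ∈ Finset.range (n + 1), (n.choose k : ℝ) * 4 ^ k) * Real.exp (t / 4) := by
        rw [Finset.sum_mul]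
        apply Finset.sum_congr rfl
        intro k _
        have hfac : (k.factorial : ℝ) ≠ 0 := by positivity
        field_simp
    _ = 5 ^ n * Real.exp (t / 4) := by
        congr 1
        have h5 : ((4:ℝ) + 1) ^ n = ∑ k ∈ Finset.range (n + 1), (4:ℝ) ^ k * 1 ^ (n - k) * (n.choose k : ℝ) :=
          add_pow 4 1 n
        rw [show (5:ℝ) = 4 + 1 by norm_num, h5]
        apply Finset.sum_congr rfl
        intro k _
        ring

lemma integrable_psiKer (n : ℕ) : Integrable (psiKer n) (volume : Measure ℂ) := by
  have hg : Integrable (fun u : ℂ => (5:ℝ) ^ n * Real.exp (-(Real.pi / 4) * ‖u‖ ^ 2)) volume := by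
    apply Integrable.const_mul
    have hb : (0:ℝ) < ((Real.pi / 4 : ℂ)).re := by
      simp
      positivity
    have := (GaussianFourier.integrable_cexp_neg_mul_sq_norm_add (V := ℂ)
      (b := (Real.pi / 4 : ℂ)) hb 0 0).norm
    apply this.congr
    filter_upwards with v
    rw [Complex.norm_exp]
    congr 1
    simp only [Complex.add_re, Complex.neg_re, Complex.mul_re]
    norm_num
    rw [← Complex.ofReal_pow, Complex.ofReal_re]
  apply hg.mono' ((continuous_psiKer n).aestronglyMeasurable)
  filter_upwards with u
  rw [Real.norm_of_nonneg (psiKer_nonneg n u)]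
  unfold psiKer
  have hns : Complex.normSq u = ‖u‖ ^ 2 := by
    rw [Complex.normSq_eq_norm_sq]
  calc psiPoly n (Real.pi * Complex.normSq u) * Real.exp (-Real.pi * Complex.normSq u / 2)
      ≤ (5 ^ n * Real.exp (Real.pi * Complex.normSq u / 4)) * Real.exp (-Real.pi * Complex.normSq u / 2) :=
        mul_le_mul_of_nonneg_right (psiPoly_le n (pi_normSq_nonneg u)) (Real.exp_nonneg _)
    _ = 5 ^ n * Real.exp (-(Real.pi / 4) * ‖u‖ ^ 2) := by
        rw [mul_assoc, ← Real.exp_add, ← hns]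
        ring_nf

lemma kernel_bound (n : ℕ) (w z : ℂ) :
    ‖polyKernel n w z‖ * Real.exp (-Real.pi * Complex.normSq z) *
      Real.exp (-Real.pi * Complex.normSq w / 2)
    ≤ psiKer n (w - z) * Real.exp (-Real.pi * Complex.normSq z / 2) := by
  set R := ((conj z) * w).re with hR
  have hK : ‖polyKernel n w z‖ ≤ psiPoly n (Real.pi * Complex.normSq (w - z)) * Real.exp (Real.pi * R) := by
    refine (norm_sum_le _ _).trans ?_
    unfold psiPoly
    rw [Finset.sum_mul]
    apply Finset.sum_le_sum
    intro k _
    have h1 : ‖((n.choose k : ℂ) * (1 / (k.factorial : ℂ)) *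
        (-Real.pi * Complex.normSq (w - z)) ^ k * Complex.exp (Real.pi * conj z * w))‖
        = (n.choose k : ℝ) * (1 / (k.factorial : ℝ)) * (Real.pi * Complex.normSq (w - z)) ^ k *
          Real.exp (Real.pi * R) := by
      rw [norm_mul, norm_mul, norm_mul, norm_pow]
      congr 1
      · congr 1
        · congr 1
          · simp
          · simp
        · have h2 : (-Real.pi * Complex.normSq (w - z) : ℂ) = ((-Real.pi * Complex.normSq (w - z) : ℝ) : ℂ) := by
            push_cast
            ring
          rw [h2, Complex.norm_real, Real.norm_eq_abs,
            abs_of_nonpos (by nlinarith [pi_normSq_nonneg (w - z)])]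
          ring_nf
      · rw [Complex.norm_exp]
        congr 1
        rw [mul_assoc, Complex.re_ofReal_mul]
    rw [h1]
  have hexp : Real.exp (Real.pi * R) * Real.exp (-Real.pi * Complex.normSq z) *
      Real.exp (-Real.pi * Complex.normSq w / 2)
      = Real.exp (-Real.pi * Complex.normSq (w - z) / 2) * Real.exp (-Real.pi * Complex.normSq z / 2) := by
    rw [← Real.exp_add, ← Real.exp_add, ← Real.exp_add]
    congr 1
    have hsub : Complex.normSq (w - z) = Complex.normSq w + Complex.normSq z - 2 * (w * conj z).re :=
      Complex.normSq_sub w z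
    have hc : (w * conj z).re = R := by rw [hR, mul_comm]
    rw [hsub, hc]
    ring
  calc ‖polyKernel n w z‖ * Real.exp (-Real.pi * Complex.normSq z) *
        Real.exp (-Real.pi * Complex.normSq w / 2)
      ≤ (psiPoly n (Real.pi * Complex.normSq (w - z)) * Real.exp (Real.pi * R)) *
          Real.exp (-Real.pi * Complex.normSq z) * Real.exp (-Real.pi * Complex.normSq w / 2) := by
        apply mul_le_mul_of_nonneg_right (mul_le_mul_of_nonneg_right hK (Real.exp_nonneg _))
          (Real.exp_nonneg _)
    _ = psiPoly n (Real.pi * Complex.normSq (w - z)) *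
          (Real.exp (Real.pi * R) * Real.exp (-Real.pi * Complex.normSq z) *
            Real.exp (-Real.pi * Complex.normSq w / 2)) := by ring
    _ = psiKer n (w - z) * Real.exp (-Real.pi * Complex.normSq z / 2) := by
        rw [hexp, psiKer]
        ring

open ENNReal in
lemma young_aux {Φ g : ℂ → ℝ≥0∞} (hΦ : Measurable Φ) (hg : Measurable g)
    {pr : ℝ} (hpr : 1 ≤ pr) (A : ℝ≥0∞) (hA : ∀ w : ℂ, ∫⁻ z : ℂ, Φ (w - z) = A) (w : ℂ) :
    (∫⁻ z : ℂ, Φ (w - z) * g z) ^ pr ≤ A ^ (pr - 1) * ∫⁻ z : ℂ, Φ (w - z) * g z ^ pr := by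
  rcases eq_or_lt_of_le hpr with h1 | h1
  · rw [← h1]
    simp [ENNReal.rpow_one]
  have hpr0 : (0:ℝ) < pr := lt_trans one_pos h1
  set q := Real.conjExponent pr with hq_def
  have hq : q.HolderConjugate pr := (Real.HolderConjugate.conjExponent h1).symm
  have hinv : 1 / q + 1 / pr = 1 := by
    rw [one_div, one_div]
    exact hq.inv_add_inv_eq_one
  have hq0 : (0:ℝ) < q := hq.pos
  have hΦw : Measurable (fun z : ℂ => Φ (w - z)) := hΦ.comp (measurable_const.sub measurable_id)
  have hrpow : ∀ (f : ℂ → ℝ≥0∞) (e : ℝ), Measurable f → Measurable (fun z => f z ^ e) :=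
    fun f e hf => ENNReal.continuous_rpow_const.measurable.comp hf
  have key : (∫⁻ z : ℂ, Φ (w - z) * g z) ≤
      A ^ (1 / q) * (∫⁻ z : ℂ, Φ (w - z) * g z ^ pr) ^ (1 / pr) := by
    have hsplit : ∀ z : ℂ, Φ (w - z) * g z =
        (Φ (w - z) ^ (1 / q)) * ((Φ (w - z) ^ (1 / pr)) * g z) := by
      intro z
      rw [← mul_assoc, ← ENNReal.rpow_add_of_nonneg _ _ (by positivity) (by positivity), hinv,
        ENNReal.rpow_one]
    have hholder := ENNReal.lintegral_mul_le_Lp_mul_Lq (volume : Measure ℂ) hq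
      (hrpow _ (1/q) hΦw).aemeasurable
      ((hrpow _ (1/pr) hΦw).mul hg).aemeasurable
    calc (∫⁻ z : ℂ, Φ (w - z) * g z)
        = ∫⁻ z : ℂ, (Φ (w - z) ^ (1 / q)) * ((Φ (w - z) ^ (1 / pr)) * g z) :=
          lintegral_congr hsplit
      _ ≤ (∫⁻ z : ℂ, (Φ (w - z) ^ (1 / q)) ^ q) ^ (1 / q) *
            (∫⁻ z : ℂ, ((Φ (w - z) ^ (1 / pr)) * g z) ^ pr) ^ (1 / pr) := hholder
      _ = A ^ (1 / q) * (∫⁻ z : ℂ, Φ (w - z) * g z ^ pr) ^ (1 / pr) := by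
          congr 2
          · rw [← hA w]
            apply lintegral_congr
            intro z
            rw [← ENNReal.rpow_mul, one_div, inv_mul_cancel₀ hq0.ne', ENNReal.rpow_one]
          · apply lintegral_congr
            intro z
            rw [ENNReal.mul_rpow_of_nonneg _ _ hpr0.le, ← ENNReal.rpow_mul, one_div,
              inv_mul_cancel₀ hpr0.ne', ENNReal.rpow_one]
  calc (∫⁻ z : ℂ, Φ (w - z) * g z) ^ pr
      ≤ (A ^ (1 / q) * (∫⁻ z : ℂ, Φ (w - z) * g z ^ pr) ^ (1 / pr)) ^ pr :=
        ENNReal.rpow_le_rpow key hpr0.le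
    _ = A ^ (pr - 1) * ∫⁻ z : ℂ, Φ (w - z) * g z ^ pr := by
        rw [ENNReal.mul_rpow_of_nonneg _ _ hpr0.le, ← ENNReal.rpow_mul, ← ENNReal.rpow_mul]
        congr 1
        · congr 1
          have h2 : 1 / q = 1 - 1 / pr := by linarith
          rw [h2]
          field_simp
        · rw [one_div, inv_mul_cancel₀ hpr0.ne', ENNReal.rpow_one]

open ENNReal in
lemma fubini_step {Φ g : ℂ → ℝ≥0∞} (hΦ : Measurable Φ) (hg : Measurable g)
    (A : ℝ≥0∞) (hA : ∀ z : ℂ, ∫⁻ w : ℂ, Φ (w - z) = A) :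
    ∫⁻ w : ℂ, ∫⁻ z : ℂ, Φ (w - z) * g z = A * ∫⁻ z : ℂ, g z := by
  have hprod : AEMeasurable (Function.uncurry fun w z : ℂ => Φ (w - z) * g z)
      ((volume : Measure ℂ).prod (volume : Measure ℂ)) := by
    apply Measurable.aemeasurable
    exact (hΦ.comp (measurable_fst.sub measurable_snd)).mul (hg.comp measurable_snd)
  rw [lintegral_lintegral_swap hprod]
  calc ∫⁻ z : ℂ, ∫⁻ w : ℂ, Φ (w - z) * g z
      = ∫⁻ z : ℂ, g z * A := by
        apply lintegral_congr
        intro z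
        have hm : Measurable (fun w : ℂ => Φ (w - z)) := hΦ.comp (measurable_id.sub measurable_const)
        rw [lintegral_mul_const (g z) hm, hA z, mul_comm]
    _ = A * ∫⁻ z : ℂ, g z := by
        rw [lintegral_mul_const A hg, mul_comm]

open ENNReal

/-- The projection `P^n` is bounded on the weighted space `L_p(ℂ)` for every `1 ≤ p ≤ ∞`. -/
theorem polyProj_bounded (n : ℕ) :
    ∃ C : ℝ, 0 < C ∧ ∀ p : ENNReal, 1 ≤ p → ∀ F : ℂ → ℂ,
      MemLp (fun z : ℂ => F z * Real.exp (-Real.pi * Complex.normSq z / 2)) p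
        (volume : Measure ℂ) →
      wLpNorm (polyProj n F) p ≤ ENNReal.ofReal C * wLpNorm F p := by
  classical
  set Φ : ℂ → ℝ≥0∞ := fun u => ENNReal.ofReal (psiKer n u) with hΦ_def
  have hΦmeas : Measurable Φ :=
    ENNReal.measurable_ofReal.comp (continuous_psiKer n).measurable
  set A : ℝ≥0∞ := ∫⁻ u : ℂ, Φ u with hA_def
  have hA_ne_top : A ≠ ⊤ := by
    have h := (integrable_psiKer n).hasFiniteIntegral
    rw [hasFiniteIntegral_iff_ofReal (Filter.Eventually.of_forall (psiKer_nonneg n))] at h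
    exact h.ne
  have hA1 : ∀ w : ℂ, ∫⁻ z : ℂ, Φ (w - z) = A := by
    intro w
    have h1 : ∀ z : ℂ, Φ (w - z) = Φ (z - w) := by
      intro z
      rw [show w - z = -(z - w) by ring]
      simp only [hΦ_def]
      rw [psiKer_neg]
    calc ∫⁻ z : ℂ, Φ (w - z) = ∫⁻ z : ℂ, Φ (z - w) := lintegral_congr h1
      _ = A := lintegral_sub_right_eq_self Φ w
  have hA2 : ∀ z : ℂ, ∫⁻ w : ℂ, Φ (w - z) = A := fun z => lintegral_sub_right_eq_self Φ z
  have hAC : A ≤ ENNReal.ofReal (A.toReal + 1) := by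
    calc A = ENNReal.ofReal A.toReal := (ENNReal.ofReal_toReal hA_ne_top).symm
      _ ≤ ENNReal.ofReal (A.toReal + 1) := ENNReal.ofReal_le_ofReal (by linarith)
  refine ⟨A.toReal + 1, by positivity, ?_⟩
  intro p hp F hF
  set g : ℂ → ℝ≥0∞ :=
    fun z => (‖F z * (Real.exp (-Real.pi * Complex.normSq z / 2) : ℂ)‖₊ : ℝ≥0∞) with hg_def
  have hg_aemeas : AEMeasurable g (volume : Measure ℂ) := hF.aestronglyMeasurable.enorm
  set g' : ℂ → ℝ≥0∞ := hg_aemeas.mk g with hg'_def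
  have hg' : Measurable g' := hg_aemeas.measurable_mk
  have hgg' : g =ᵐ[volume] g' := hg_aemeas.ae_eq_mk
  -- Step A : pointwise domination of the weighted projection
  have hstep : ∀ w : ℂ,
      (‖polyProj n F w * (Real.exp (-Real.pi * Complex.normSq w / 2) : ℂ)‖₊ : ℝ≥0∞)
        ≤ ∫⁻ z : ℂ, Φ (w - z) * g z := by
    intro w
    have h0 : (‖polyProj n F w‖₊ : ℝ≥0∞) ≤
        ∫⁻ z : ℂ, (‖F z * polyKernel n w z *
          (Real.exp (-Real.pi * Complex.normSq z) : ℂ)‖₊ : ℝ≥0∞) :=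
      enorm_integral_le_lintegral_enorm _
    have hc_ne : ((‖(Real.exp (-Real.pi * Complex.normSq w / 2) : ℂ)‖₊ : ℝ≥0∞)) ≠ ⊤ :=
      ENNReal.coe_ne_top
    calc (‖polyProj n F w * (Real.exp (-Real.pi * Complex.normSq w / 2) : ℂ)‖₊ : ℝ≥0∞)
        = (‖polyProj n F w‖₊ : ℝ≥0∞) *
            (‖(Real.exp (-Real.pi * Complex.normSq w / 2) : ℂ)‖₊ : ℝ≥0∞) := by
          rw [nnnorm_mul, ENNReal.coe_mul]
      _ ≤ (∫⁻ z : ℂ, (‖F z * polyKernel n w z *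
              (Real.exp (-Real.pi * Complex.normSq z) : ℂ)‖₊ : ℝ≥0∞)) *
            (‖(Real.exp (-Real.pi * Complex.normSq w / 2) : ℂ)‖₊ : ℝ≥0∞) :=
          mul_le_mul_left h0 _
      _ = ∫⁻ z : ℂ, (‖F z * polyKernel n w z *
              (Real.exp (-Real.pi * Complex.normSq z) : ℂ)‖₊ : ℝ≥0∞) *
            (‖(Real.exp (-Real.pi * Complex.normSq w / 2) : ℂ)‖₊ : ℝ≥0∞) :=
          (lintegral_mul_const' _ _ hc_ne).symm
      _ ≤ ∫⁻ z : ℂ, Φ (w - z) * g z := by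
          apply lintegral_mono
          intro z
          simp only [hg_def, hΦ_def]
          rw [← enorm_eq_nnnorm, ← enorm_eq_nnnorm, ← enorm_eq_nnnorm, ← ofReal_norm, ← ofReal_norm,
            ← ofReal_norm, ← ENNReal.ofReal_mul (norm_nonneg _),
            ← ENNReal.ofReal_mul (psiKer_nonneg n _)]
          apply ENNReal.ofReal_le_ofReal
          rw [norm_mul, norm_mul, norm_mul, Complex.norm_real, Complex.norm_real, Complex.norm_real,
            Real.norm_of_nonneg (Real.exp_nonneg _), Real.norm_of_nonneg (Real.exp_nonneg _),
            Real.norm_of_nonneg (Real.exp_nonneg _)]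
          have hkb := kernel_bound n w z
          have h3 := mul_le_mul_of_nonneg_left hkb (norm_nonneg (F z))
          calc ‖F z‖ * ‖polyKernel n w z‖ * Real.exp (-Real.pi * Complex.normSq z) *
                Real.exp (-Real.pi * Complex.normSq w / 2)
              = ‖F z‖ * (‖polyKernel n w z‖ * Real.exp (-Real.pi * Complex.normSq z) *
                  Real.exp (-Real.pi * Complex.normSq w / 2)) := by ring
            _ ≤ ‖F z‖ * (psiKer n (w - z) * Real.exp (-Real.pi * Complex.normSq z / 2)) := h3
            _ = psiKer n (w - z) * (‖F z‖ * Real.exp (-Real.pi * Complex.normSq z / 2)) := by ring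
  -- the integrals against `g` and `g'` agree
  have hgcongr : ∀ w : ℂ, (∫⁻ z : ℂ, Φ (w - z) * g z) = ∫⁻ z : ℂ, Φ (w - z) * g' z := by
    intro w
    apply lintegral_congr_ae
    filter_upwards [hgg'] with z hz
    rw [hz]
  by_cases htop : p = ⊤
  · -- the case `p = ∞`
    subst htop
    unfold wLpNorm
    rw [eLpNorm_exponent_top, eLpNorm_exponent_top]
    set M : ℝ≥0∞ := eLpNormEssSup
      (fun z : ℂ => F z * (Real.exp (-Real.pi * Complex.normSq z / 2) : ℂ)) volume with hM_def
    have hMg : ∀ᵐ z : ℂ ∂(volume : Measure ℂ), g z ≤ M := ae_le_eLpNormEssSup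
    apply essSup_le_of_ae_le (hfbdd := by isBoundedDefault)
    filter_upwards with w
    calc (‖polyProj n F w * (Real.exp (-Real.pi * Complex.normSq w / 2) : ℂ)‖₊ : ℝ≥0∞)
        ≤ ∫⁻ z : ℂ, Φ (w - z) * g z := hstep w
      _ ≤ ∫⁻ z : ℂ, Φ (w - z) * M := by
          apply lintegral_mono_ae
          filter_upwards [hMg] with z hz
          exact mul_le_mul_right hz _
      _ = A * M := by
          have hm : Measurable (fun z : ℂ => Φ (w - z)) :=
            hΦmeas.comp (measurable_const.sub measurable_id)
          rw [lintegral_mul_const M hm, hA1 w]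
      _ ≤ ENNReal.ofReal (A.toReal + 1) * M := mul_le_mul_left hAC _
  · -- the case `p < ∞`
    have hp0 : p ≠ 0 := by
      intro h
      rw [h] at hp
      simp at hp
    set pr : ℝ := p.toReal with hpr_def
    have hpr1 : (1:ℝ) ≤ pr := by
      have := ENNReal.toReal_mono htop hp
      simpa using this
    have hpr0 : (0:ℝ) < pr := lt_of_lt_of_le one_pos hpr1
    unfold wLpNorm
    rw [eLpNorm_eq_lintegral_rpow_enorm_toReal hp0 htop, eLpNorm_eq_lintegral_rpow_enorm_toReal hp0 htop]
    have h4 : (∫⁻ w : ℂ, (‖polyProj n F w *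
        (Real.exp (-Real.pi * Complex.normSq w / 2) : ℂ)‖₊ : ℝ≥0∞) ^ pr)
        ≤ A ^ pr * ∫⁻ z : ℂ, g' z ^ pr := by
      calc ∫⁻ w : ℂ, (‖polyProj n F w *
            (Real.exp (-Real.pi * Complex.normSq w / 2) : ℂ)‖₊ : ℝ≥0∞) ^ pr
          ≤ ∫⁻ w : ℂ, (∫⁻ z : ℂ, Φ (w - z) * g' z) ^ pr := by
            apply lintegral_mono
            intro w
            apply ENNReal.rpow_le_rpow _ hpr0.le
            rw [← hgcongr w]
            exact hstep w
        _ ≤ ∫⁻ w : ℂ, (A ^ (pr - 1) * ∫⁻ z : ℂ, Φ (w - z) * g' z ^ pr) :=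
            lintegral_mono (young_aux hΦmeas hg' hpr1 A hA1)
        _ = A ^ (pr - 1) * ∫⁻ w : ℂ, ∫⁻ z : ℂ, Φ (w - z) * g' z ^ pr :=
            lintegral_const_mul' _ _ (ENNReal.rpow_ne_top_of_nonneg (by linarith) hA_ne_top)
        _ = A ^ (pr - 1) * (A * ∫⁻ z : ℂ, g' z ^ pr) := by
            have hgp : Measurable (fun z : ℂ => g' z ^ pr) := by
              exact ENNReal.continuous_rpow_const.measurable.comp hg'
            rw [fubini_step hΦmeas hgp A hA2]
        _ = A ^ pr * ∫⁻ z : ℂ, g' z ^ pr := by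
            rw [← mul_assoc]
            congr 1
            calc A ^ (pr - 1) * A = A ^ (pr - 1) * A ^ (1:ℝ) := by rw [ENNReal.rpow_one]
              _ = A ^ (pr - 1 + 1) :=
                  (ENNReal.rpow_add_of_nonneg _ _ (by linarith) zero_le_one).symm
              _ = A ^ pr := by rw [sub_add_cancel]
    calc (∫⁻ w : ℂ, (‖polyProj n F w *
          (Real.exp (-Real.pi * Complex.normSq w / 2) : ℂ)‖₊ : ℝ≥0∞) ^ p.toReal) ^ (1 / p.toReal)
        ≤ (A ^ pr * ∫⁻ z : ℂ, g' z ^ pr) ^ (1 / pr) :=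
          ENNReal.rpow_le_rpow h4 (by positivity)
      _ = A * (∫⁻ z : ℂ, g' z ^ pr) ^ (1 / pr) := by
          rw [ENNReal.mul_rpow_of_nonneg _ _ (by positivity), ← ENNReal.rpow_mul,
            mul_one_div, div_self hpr0.ne', ENNReal.rpow_one]
      _ = A * (∫⁻ z : ℂ, g z ^ pr) ^ (1 / pr) := by
          congr 2
          apply lintegral_congr_ae
          filter_upwards [hgg'] with z hz
          rw [hz]
      _ ≤ ENNReal.ofReal (A.toReal + 1) *
            (∫⁻ z : ℂ, (‖F z * (Real.exp (-Real.pi * Complex.normSq z / 2) : ℂ)‖₊ : ℝ≥0∞) ^ p.toReal) ^ (1 / p.toReal) :=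
          mul_le_mul_left hAC _
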